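/- arXiv:1806.08487 — 4 statements merged into one kernel-verified Lean document; each statement's English description precedes it below -/
import Mathlib

section
/- Let C ∈ ℝ and C' > 0, and define g(τ) = ∫_τ^∞ C' * exp(-(η+C)^2/2) * (η+C)^2 dη. Then g(τ) / (C' * exp(-(τ+C)^2/2) * τ) → 1 as τ → ∞. -/
open MeasureTheory Filter Set

private lemma aux_int0 : MeasureTheory.Integrable (fun x : ℝ => Real.exp (-x ^ 2 / 2)) := by
  have h : ∀ x : ℝ, -x ^ 2 / 2 = -(1/2) * x ^ 2 := fun x => by ring
  simp_rw [h]
  exact integrable_exp_neg_mul_sq (by norm_num)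

private lemma aux_int1 : MeasureTheory.Integrable (fun x : ℝ => x * Real.exp (-x ^ 2 / 2)) := by
  have h : ∀ x : ℝ, -x ^ 2 / 2 = -(1/2) * x ^ 2 := fun x => by ring
  simp_rw [h]
  exact integrable_mul_exp_neg_mul_sq (by norm_num)

private lemma aux_int2 : MeasureTheory.Integrable (fun x : ℝ => x ^ 2 * Real.exp (-x ^ 2 / 2)) := by
  have h : ∀ x : ℝ, -x ^ 2 / 2 = -(1/2) * x ^ 2 := fun x => by ring
  simp_rw [h]
  have := integrable_rpow_mul_exp_neg_mul_sq (b := (1:ℝ)/2) (by norm_num) (s := 2) (by norm_num)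
  simpa [Real.rpow_two] using this

private lemma aux_exp_deriv (x : ℝ) :
    HasDerivAt (fun x : ℝ => Real.exp (-x ^ 2 / 2)) (-x * Real.exp (-x ^ 2 / 2)) x := by
  have h1 : HasDerivAt (fun x : ℝ => -x ^ 2 / 2) (-x) x := by
    have := ((hasDerivAt_pow 2 x).neg.div_const 2)
    simpa using this.congr_deriv (by ring)
  simpa [mul_comm] using h1.exp

private lemma aux_exp_tendsto :
    Tendsto (fun x : ℝ => Real.exp (-x ^ 2 / 2)) atTop (nhds 0) := by
  apply Real.tendsto_exp_atBot.comp
  have h : Tendsto (fun x : ℝ => x ^ 2) atTop atTop := tendsto_pow_atTop two_ne_zero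
  have : Tendsto (fun x : ℝ => -x ^ 2) atTop atBot := tendsto_neg_atBot_iff.mpr h
  exact this.atBot_div_const (by norm_num)

private lemma aux_x_exp_tendsto :
    Tendsto (fun x : ℝ => x * Real.exp (-x ^ 2 / 2)) atTop (nhds 0) := by
  have h := Real.tendsto_pow_mul_exp_neg_atTop_nhds_zero 1
  apply squeeze_zero' (g := fun x : ℝ => x ^ 1 * Real.exp (-x))
  · filter_upwards [eventually_ge_atTop (0:ℝ)] with x hx
    positivity
  · filter_upwards [eventually_ge_atTop (2:ℝ)] with x hx
    have h1 : x ≤ x ^ 2 / 2 := by nlinarith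
    have := Real.exp_le_exp.mpr (neg_le_neg h1)
    calc x * Real.exp (-x ^ 2 / 2) ≤ x * Real.exp (-x) := by
          apply mul_le_mul_of_nonneg_left _ (by linarith)
          simpa [neg_div] using this
      _ = x ^ 1 * Real.exp (-x) := by ring
  · exact h

private lemma keyB (s : ℝ) :
    ∫ x in Ioi s, x * Real.exp (-x ^ 2 / 2) = Real.exp (-s ^ 2 / 2) := by
  have h := integral_Ioi_of_hasDerivAt_of_tendsto' (a := s)
    (f := fun x : ℝ => -Real.exp (-x ^ 2 / 2))
    (f' := fun x : ℝ => x * Real.exp (-x ^ 2 / 2))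
    (m := 0)
    (fun x _ => by simpa using (aux_exp_deriv x).fun_neg)
    aux_int1.integrableOn
    (by simpa using aux_exp_tendsto.neg)
  simpa using h

private lemma keyA (s : ℝ) :
    ∫ x in Ioi s, x ^ 2 * Real.exp (-x ^ 2 / 2) =
      s * Real.exp (-s ^ 2 / 2) + ∫ x in Ioi s, Real.exp (-x ^ 2 / 2) := by
  have hcont : Continuous (fun x : ℝ => Real.exp (-x ^ 2 / 2)) := by
    continuity
  have hderiv : ∀ x ∈ Ici s, HasDerivAt
      (fun x : ℝ => -(x * Real.exp (-x ^ 2 / 2)) + ∫ t in s..x, Real.exp (-t ^ 2 / 2))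
      (x ^ 2 * Real.exp (-x ^ 2 / 2)) x := by
    intro x _
    have h1 : HasDerivAt (fun x : ℝ => x * Real.exp (-x ^ 2 / 2))
        (Real.exp (-x ^ 2 / 2) + x * (-x * Real.exp (-x ^ 2 / 2))) x := by
      simpa using (hasDerivAt_id' x).fun_mul (aux_exp_deriv x)
    have h2 : HasDerivAt (fun u : ℝ => ∫ t in s..u, Real.exp (-t ^ 2 / 2))
        (Real.exp (-x ^ 2 / 2)) x := by
      exact intervalIntegral.integral_hasDerivAt_right
        (aux_int0.intervalIntegrable)
        (hcont.stronglyMeasurable.stronglyMeasurableAtFilter)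
        hcont.continuousAt
    have := h1.fun_neg.fun_add h2
    exact this.congr_deriv (by ring)
  have htends : Tendsto
      (fun x : ℝ => -(x * Real.exp (-x ^ 2 / 2)) + ∫ t in s..x, Real.exp (-t ^ 2 / 2))
      atTop (nhds (0 + ∫ t in Ioi s, Real.exp (-t ^ 2 / 2))) := by
    apply Tendsto.add
    · simpa using aux_x_exp_tendsto.neg
    · exact intervalIntegral_tendsto_integral_Ioi s aux_int0.integrableOn tendsto_id
  have h := integral_Ioi_of_hasDerivAt_of_tendsto' hderiv aux_int2.integrableOn htends
  rw [h]
  simp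
  ring

private lemma tail_nonneg (s : ℝ) : 0 ≤ ∫ x in Ioi s, Real.exp (-x ^ 2 / 2) :=
  setIntegral_nonneg measurableSet_Ioi (fun x _ => (Real.exp_pos _).le)

private lemma tail_le {s : ℝ} (hs : 0 < s) :
    ∫ x in Ioi s, Real.exp (-x ^ 2 / 2) ≤ Real.exp (-s ^ 2 / 2) / s := by
  have h1 : ∫ x in Ioi s, Real.exp (-x ^ 2 / 2) ≤
      ∫ x in Ioi s, s⁻¹ * (x * Real.exp (-x ^ 2 / 2)) := by
    apply setIntegral_mono_on aux_int0.integrableOn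
      ((aux_int1.const_mul s⁻¹).integrableOn) measurableSet_Ioi
    intro x hx
    have hx' : s ≤ x := (le_of_lt hx)
    have h2 : (1:ℝ) ≤ s⁻¹ * x := by
      rw [← div_eq_inv_mul]
      exact (one_le_div hs).mpr hx'
    calc Real.exp (-x ^ 2 / 2) = 1 * Real.exp (-x ^ 2 / 2) := by ring
      _ ≤ (s⁻¹ * x) * Real.exp (-x ^ 2 / 2) :=
          mul_le_mul_of_nonneg_right h2 (Real.exp_pos _).le
      _ = s⁻¹ * (x * Real.exp (-x ^ 2 / 2)) := by ring
  rw [integral_const_mul, keyB] at h1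
  rw [div_eq_inv_mul]
  exact h1


private lemma ratio_eq (C C' : ℝ) (hC' : 0 < C') {τ : ℝ} (hτ : 0 < τ) :
    (∫ η in Set.Ioi τ, C' * Real.exp (-(η + C) ^ 2 / 2) * (η + C) ^ 2) /
        (C' * Real.exp (-(τ + C) ^ 2 / 2) * τ) =
      ((τ + C) * Real.exp (-(τ + C) ^ 2 / 2) + ∫ x in Ioi (τ + C), Real.exp (-x ^ 2 / 2)) /
        (Real.exp (-(τ + C) ^ 2 / 2) * τ) := by
  have htrans : (∫ η in Set.Ioi τ, C' * Real.exp (-(η + C) ^ 2 / 2) * (η + C) ^ 2)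
      = C' * ∫ x in Ioi (τ + C), x ^ 2 * Real.exp (-x ^ 2 / 2) := by
    have hmp := (MeasureTheory.measurePreserving_add_right (volume : Measure ℝ) C)
    have h := hmp.setIntegral_preimage_emb
      (MeasurableEquiv.addRight C).measurableEmbedding
      (fun x => x ^ 2 * Real.exp (-x ^ 2 / 2)) (Ioi (τ + C))
    rw [preimage_add_const_Ioi, add_sub_cancel_right] at h
    calc ∫ η in Set.Ioi τ, C' * Real.exp (-(η + C) ^ 2 / 2) * (η + C) ^ 2
        = ∫ η in Set.Ioi τ, C' * ((η + C) ^ 2 * Real.exp (-(η + C) ^ 2 / 2)) := by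
          congr 1; funext η; ring
      _ = C' * ∫ η in Set.Ioi τ, (η + C) ^ 2 * Real.exp (-(η + C) ^ 2 / 2) :=
          integral_const_mul _ _
      _ = C' * ∫ x in Ioi (τ + C), x ^ 2 * Real.exp (-x ^ 2 / 2) := by rw [h]
  rw [htrans, keyA, show C' * Real.exp (-(τ + C) ^ 2 / 2) * τ
      = C' * (Real.exp (-(τ + C) ^ 2 / 2) * τ) by ring,
    mul_div_mul_left _ _ (ne_of_gt hC')]

/-- With `g(τ) = ∫_τ^∞ C' exp(-(η+C)²/2) (η+C)² dη`, we have
`g(τ) / (C' exp(-(τ+C)²/2) τ) → 1` as `τ → ∞`. -/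
theorem stmt_3 (C C' : ℝ) (hC' : 0 < C') :
    Tendsto
      (fun τ : ℝ =>
        (∫ η in Set.Ioi τ, C' * Real.exp (-(η + C) ^ 2 / 2) * (η + C) ^ 2) /
          (C' * Real.exp (-(τ + C) ^ 2 / 2) * τ))
      atTop (nhds 1) := by
  have hlow : Tendsto (fun τ : ℝ => (τ + C) / τ) atTop (nhds 1) := by
    have h0 : Tendsto (fun τ : ℝ => C / τ) atTop (nhds 0) :=
      tendsto_const_nhds.div_atTop tendsto_id
    have h1 : Tendsto (fun τ : ℝ => 1 + C / τ) atTop (nhds (1 + 0)) :=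
      tendsto_const_nhds.add h0
    rw [add_zero] at h1
    apply h1.congr'
    filter_upwards [eventually_ne_atTop (0:ℝ)] with τ hτ
    field_simp
  have hupp : Tendsto (fun τ : ℝ => (τ + C) / τ + 1 / ((τ + C) * τ)) atTop (nhds 1) := by
    have h2 : Tendsto (fun τ : ℝ => 1 / ((τ + C) * τ)) atTop (nhds 0) := by
      apply tendsto_const_nhds.div_atTop
      exact (tendsto_atTop_add_const_right _ C tendsto_id).atTop_mul_atTop₀ tendsto_id
    simpa using hlow.add h2
  apply tendsto_of_tendsto_of_tendsto_of_le_of_le' hlow hupp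
  · -- lower bound
    filter_upwards [eventually_ge_atTop (1:ℝ), eventually_ge_atTop (1 - C)] with τ h1 h2
    have hτ0 : 0 < τ := by linarith
    have hs0 : 0 < τ + C := by linarith
    have hE : 0 < Real.exp (-(τ + C) ^ 2 / 2) := Real.exp_pos _
    rw [ratio_eq C C' hC' hτ0]
    rw [div_le_div_iff₀ hτ0 (mul_pos hE hτ0)]
    nlinarith [tail_nonneg (τ + C)]
  · filter_upwards [eventually_ge_atTop (1:ℝ), eventually_ge_atTop (1 - C)] with τ h1 h2
    have hτ0 : 0 < τ := by linarith
    have hs0 : 0 < τ + C := by linarith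
    have hE : 0 < Real.exp (-(τ + C) ^ 2 / 2) := Real.exp_pos _
    rw [ratio_eq C C' hC' hτ0]
    have hT := tail_le hs0
    calc ((τ + C) * Real.exp (-(τ + C) ^ 2 / 2) + ∫ x in Ioi (τ + C), Real.exp (-x ^ 2 / 2)) /
          (Real.exp (-(τ + C) ^ 2 / 2) * τ)
        ≤ ((τ + C) * Real.exp (-(τ + C) ^ 2 / 2) + Real.exp (-(τ + C) ^ 2 / 2) / (τ + C)) /
          (Real.exp (-(τ + C) ^ 2 / 2) * τ) := by gcongr
      _ = (τ + C) / τ + 1 / ((τ + C) * τ) := by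
          field_simp
end

section
/- Let d ≥ 2 and let x : [0,∞) → (0,∞) be a solution of x' = -x^d + h(x) where h(x)/x^d → 0 as x → 0⁺, and suppose x(τ) → 0 as τ → ∞. Then τ^{1/(d-1)} x(τ) → (d-1)^{-1/(d-1)} as τ → ∞. -/
open Filter

/-- If `f'(t) → L` at top then `f(t)/t → L`. -/
lemma aux_deriv_div (f f' : ℝ → ℝ) (L : ℝ)
    (hf : ∀ t : ℝ, 0 ≤ t → HasDerivAt f (f' t) t)
    (hL : Tendsto f' atTop (nhds L)) :
    Tendsto (fun t => f t / t) atTop (nhds L) := by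
  rw [Metric.tendsto_atTop] at hL ⊢
  intro ε hε
  obtain ⟨T₀, hT₀⟩ := hL (ε / 2) (by positivity)
  set T : ℝ := max T₀ 1 with hT
  have hT1 : (1 : ℝ) ≤ T := le_max_right _ _
  have hT0 : (0 : ℝ) ≤ T := by linarith
  set C : ℝ := |f T| + |L| * T with hC
  have hC0 : 0 ≤ C := by positivity
  refine ⟨max T (2 * (C + 1) / ε), fun τ hτ => ?_⟩
  have hτT : T ≤ τ := le_trans (le_max_left _ _) hτ
  have hτC : 2 * (C + 1) / ε ≤ τ := le_trans (le_max_right _ _) hτ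
  have hτpos : (0 : ℝ) < τ := by linarith
  -- mean value estimate on [T, τ]
  have key : |f τ - f T - L * (τ - T)| ≤ ε / 2 * (τ - T) := by
    have := (convex_Icc T τ).norm_image_sub_le_of_norm_hasDerivWithin_le
      (f := fun s => f s - L * s) (f' := fun s => f' s - L) (C := ε / 2)
      (fun s hs => by
        have hs0 : (0 : ℝ) ≤ s := le_trans hT0 hs.1
        exact ((hf s hs0).sub (by simpa using (hasDerivAt_id s).const_mul L)).hasDerivWithinAt)
      (fun s hs => by
        have : dist (f' s) L < ε / 2 := hT₀ s (le_trans (le_max_left _ _) hs.1)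
        rw [Real.dist_eq] at this
        exact le_of_lt (by simpa [Real.norm_eq_abs] using this))
      (Set.left_mem_Icc.2 hτT) (Set.right_mem_Icc.2 hτT)
    rw [Real.norm_eq_abs, Real.norm_eq_abs] at this
    calc |f τ - f T - L * (τ - T)| = |(f τ - L * τ) - (f T - L * T)| := by ring_nf
      _ ≤ ε / 2 * |τ - T| := this
      _ = ε / 2 * (τ - T) := by rw [abs_of_nonneg (by linarith)]
  have habs : |f τ - L * τ| ≤ ε / 2 * τ + C := by
    have h1 : |f τ - L * τ| ≤ |f τ - f T - L * (τ - T)| + |f T - L * T| := by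
      have : f τ - L * τ = (f τ - f T - L * (τ - T)) + (f T - L * T) := by ring
      rw [this]; exact abs_add_le _ _
    have h2 : |f T - L * T| ≤ C := by
      calc |f T - L * T| ≤ |f T| + |L * T| := abs_sub _ _
        _ = C := by rw [abs_mul, abs_of_nonneg hT0]
    calc |f τ - L * τ| ≤ ε / 2 * (τ - T) + C := by linarith
      _ ≤ ε / 2 * τ + C := by nlinarith
  rw [Real.dist_eq]
  have : f τ / τ - L = (f τ - L * τ) / τ := by field_simp
  rw [this, abs_div, abs_of_pos hτpos]
  have hCτ : C / τ < ε / 2 := by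
    rw [div_lt_iff₀ hτpos]
    have : 2 * (C + 1) ≤ ε * τ := by
      rw [div_le_iff₀ hε] at hτC; linarith
    nlinarith
  calc |f τ - L * τ| / τ ≤ (ε / 2 * τ + C) / τ := by gcongr
    _ = ε / 2 + C / τ := by field_simp
    _ < ε / 2 + ε / 2 := by linarith
    _ = ε := by ring

/-- Center-manifold asymptotics: a positive solution of `x' = -x^d + h(x)` with
`h(x) = o(x^d)` as `x → 0⁺` which tends to `0` satisfies
`τ^(1/(d-1)) x(τ) → (d-1)^(-1/(d-1))`. -/
theorem stmt_8 (d : ℕ) (hd : 2 ≤ d) (x h : ℝ → ℝ)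
    (hxpos : ∀ τ : ℝ, 0 ≤ τ → 0 < x τ)
    (hh : Tendsto (fun y : ℝ => h y / y ^ d) (nhdsWithin 0 (Set.Ioi 0)) (nhds 0))
    (hode : ∀ τ : ℝ, 0 ≤ τ → HasDerivAt x (-(x τ) ^ d + h (x τ)) τ)
    (hlim : Tendsto x atTop (nhds 0)) :
    Tendsto (fun τ : ℝ => τ ^ ((1 : ℝ) / (d - 1 : ℝ)) * x τ) atTop
      (nhds ((d - 1 : ℝ) ^ (-(1 : ℝ) / (d - 1 : ℝ)))) := by
  obtain ⟨m, rfl⟩ : ∃ m, d = m + 2 := ⟨d - 2, by omega⟩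
  have hm1 : (0 : ℝ) < (m : ℝ) + 1 := by positivity
  have hcast : ((m + 2 : ℕ) : ℝ) - 1 = (m : ℝ) + 1 := by push_cast; ring
  -- the substitution u = x^{-(m+1)}
  set u : ℝ → ℝ := fun τ => ((x τ) ^ (m + 1))⁻¹ with hu_def
  set u' : ℝ → ℝ := fun τ => ((m : ℝ) + 1) * (1 - h (x τ) / (x τ) ^ (m + 2)) with hu'_def
  -- h(x τ)/(x τ)^d → 0
  have hv : Tendsto (fun τ => h (x τ) / (x τ) ^ (m + 2)) atTop (nhds 0) := by
    apply hh.comp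
    rw [tendsto_nhdsWithin_iff]
    exact ⟨hlim, eventually_atTop.2 ⟨0, fun τ hτ => hxpos τ hτ⟩⟩
  -- u has derivative u'
  have hu : ∀ τ : ℝ, 0 ≤ τ → HasDerivAt u (u' τ) τ := by
    intro τ hτ
    have hx0 : x τ ≠ 0 := (hxpos τ hτ).ne'
    have h1 : HasDerivAt (fun t => (x t) ^ (m + 1))
        (↑(m + 1) * (x τ) ^ m * (-(x τ) ^ (m + 2) + h (x τ))) τ := by
      exact (by simpa using (hode τ hτ).pow (m + 1) : HasDerivAt (x ^ (m + 1))
        (↑(m + 1) * (x τ) ^ m * (-(x τ) ^ (m + 2) + h (x τ))) τ)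
    have h2 : HasDerivAt u (-(↑(m + 1) * x τ ^ m * (-x τ ^ (m + 2) + h (x τ))) / (x τ ^ (m + 1)) ^ 2) τ :=
      h1.inv (pow_ne_zero _ hx0)
    convert h2 using 1
    rw [hu'_def]
    field_simp
    push_cast
    ring
  -- u' → m+1
  have hu' : Tendsto u' atTop (nhds ((m : ℝ) + 1)) := by
    have h0 : Tendsto (fun τ => (1 : ℝ) - h (x τ) / (x τ) ^ (m + 2)) atTop (nhds (1 - 0)) :=
      tendsto_const_nhds.sub hv
    have h1 := h0.const_mul ((m : ℝ) + 1)
    simpa [hu'_def] using h1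
  have hdiv : Tendsto (fun τ => u τ / τ) atTop (nhds ((m : ℝ) + 1)) :=
    aux_deriv_div u u' _ hu hu'
  have hfin : Tendsto (fun τ => (u τ / τ) ^ (-(1 : ℝ) / ((m : ℝ) + 1))) atTop
      (nhds (((m : ℝ) + 1) ^ (-(1 : ℝ) / ((m : ℝ) + 1)))) :=
    hdiv.rpow_const (Or.inl hm1.ne')
  rw [hcast]
  refine hfin.congr' ?_
  filter_upwards [eventually_ge_atTop (1 : ℝ)] with τ hτ
  have hτ0 : (0 : ℝ) < τ := by linarith
  have hx : 0 < x τ := hxpos τ (by linarith)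
  have hb : (0 : ℝ) < (x τ) ^ (m + 1) * τ := by positivity
  have e1 : u τ / τ = ((x τ) ^ (m + 1) * τ)⁻¹ := by
    rw [hu_def, div_eq_mul_inv, ← mul_inv]
  rw [e1, neg_div, Real.rpow_neg (inv_nonneg.2 hb.le), Real.inv_rpow hb.le, inv_inv,
    Real.mul_rpow (by positivity) hτ0.le, ← Real.rpow_natCast (x τ) (m + 1),
    ← Real.rpow_mul hx.le]
  have : ((m + 1 : ℕ) : ℝ) * (1 / ((m : ℝ) + 1)) = 1 := by
    push_cast
    field_simp
  rw [this, Real.rpow_one, mul_comm]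
end

section
/- Let a ∈ (0,1/2), θ ∈ (0,π/2). The point (r,x) = (0, (1-2a)/(2a cos θ)) is an equilibrium of the system dr/dτ = -(r x / sin θ)(1 + 2a cos θ · x), dx/dτ = (2x²/sin θ)(cos θ (1-2a) x - 2a cos²θ x²), and the Jacobian there has two negative eigenvalues (it is a hyperbolic sink). -/
/-- For `a ∈ (0,1/2)`, `θ ∈ (0,π/2)`, the point `(0, (1-2a)/(2a cos θ))` is an
equilibrium of the desingularized Andrews system and the Jacobian there has two
negative eigenvalues (hyperbolic sink). -/
theorem stmt_9 (a θ : ℝ) (ha0 : 0 < a) (ha : a < 1 / 2)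
    (hθ0 : 0 < θ) (hθ : θ < Real.pi / 2) :
    (fun p : ℝ × ℝ =>
        (-(p.1 * p.2 / Real.sin θ) * (1 + 2 * a * Real.cos θ * p.2),
          2 * p.2 ^ 2 / Real.sin θ *
            (Real.cos θ * (1 - 2 * a) * p.2 - 2 * a * Real.cos θ ^ 2 * p.2 ^ 2)))
      ((0 : ℝ), (1 - 2 * a) / (2 * a * Real.cos θ)) = (0, 0) ∧
    ∃ l1 l2 : ℝ, l1 < 0 ∧ l2 < 0 ∧
      HasFDerivAt
        (fun p : ℝ × ℝ =>
          (-(p.1 * p.2 / Real.sin θ) * (1 + 2 * a * Real.cos θ * p.2),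
            2 * p.2 ^ 2 / Real.sin θ *
              (Real.cos θ * (1 - 2 * a) * p.2 - 2 * a * Real.cos θ ^ 2 * p.2 ^ 2)))
        ((l1 • ContinuousLinearMap.fst ℝ ℝ ℝ).prod
          (l2 • ContinuousLinearMap.snd ℝ ℝ ℝ))
        ((0 : ℝ), (1 - 2 * a) / (2 * a * Real.cos θ)) := by
  set s := Real.sin θ with hs_def
  set c := Real.cos θ with hc_def
  have hs : 0 < s := Real.sin_pos_of_pos_of_lt_pi hθ0 (lt_trans hθ (by linarith [Real.pi_pos]))
  have hc : 0 < c := Real.cos_pos_of_mem_Ioo ⟨by linarith [Real.pi_pos], hθ⟩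
  set x0 : ℝ := (1 - 2 * a) / (2 * a * c) with hx0_def
  have h2a : (0:ℝ) < 1 - 2 * a := by linarith
  have hx0 : 0 < x0 := div_pos h2a (by positivity)
  have h2ac : (2 : ℝ) * a * c ≠ 0 := by positivity
  have hkey : 2 * a * c * x0 = 1 - 2 * a := by
    rw [hx0_def, mul_div_cancel₀ _ h2ac]
  clear_value s c x0
  clear hs_def hc_def hx0_def
  -- the point is an equilibrium
  have heq0 : c * (1 - 2 * a) * x0 - 2 * a * c ^ 2 * x0 ^ 2 = 0 := by
    nlinarith [hkey]
  constructor
  · simp only [Prod.mk.injEq]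
    refine ⟨by ring, ?_⟩
    rw [heq0]; ring
  · refine ⟨-(x0 / s) * (2 - 2 * a), -(2 * c * (1 - 2 * a) * x0 ^ 2 / s), ?_, ?_, ?_⟩
    · have h2a' : (0:ℝ) < 2 - 2 * a := by linarith
      have : 0 < (x0 / s) * (2 - 2 * a) := mul_pos (div_pos hx0 hs) h2a'
      linarith
    · have : 0 < 2 * c * (1 - 2 * a) * x0 ^ 2 / s := by positivity
      linarith
    · -- derivative of second coordinate (function of p.2 only)
      have hG : HasDerivAt (fun x : ℝ => 2 * x ^ 2 / s *
          (c * (1 - 2 * a) * x - 2 * a * c ^ 2 * x ^ 2))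
          (-(2 * c * (1 - 2 * a) * x0 ^ 2 / s)) x0 := by
        have h1 : HasDerivAt (fun x : ℝ => 2 * x ^ 2 / s)
            (2 * (2 * x0) / s) x0 := by
          simpa using (((hasDerivAt_pow 2 x0).const_mul 2).div_const s)
        have h2 : HasDerivAt (fun x : ℝ => c * (1 - 2 * a) * x - 2 * a * c ^ 2 * x ^ 2)
            (c * (1 - 2 * a) - 2 * a * c ^ 2 * (2 * x0)) x0 := by
          simpa [Pi.sub_def] using (((hasDerivAt_id x0).const_mul (c * (1 - 2 * a))).sub
            ((hasDerivAt_pow 2 x0).const_mul (2 * a * c ^ 2)))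
        have h3 : HasDerivAt (fun x : ℝ => 2 * x ^ 2 / s *
            (c * (1 - 2 * a) * x - 2 * a * c ^ 2 * x ^ 2)) _ x0 := h1.mul h2
        have h4 : c * (1 - 2 * a) - 2 * a * c ^ 2 * (2 * x0) = -(c * (1 - 2 * a)) := by
          linear_combination (-2) * c * hkey
        rw [heq0, h4] at h3
        convert h3 using 1
        ring
      -- derivative of first coordinate factor
      have hH : HasDerivAt (fun x : ℝ => -(x / s) * (1 + 2 * a * c * x))
          ((-(1 / s)) * (1 + 2 * a * c * x0) + (-(x0 / s)) * (2 * a * c)) x0 := by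
        have h1 : HasDerivAt (fun x : ℝ => -(x / s)) (-(1 / s)) x0 := by
          simpa [Pi.neg_def] using ((hasDerivAt_id x0).div_const s).neg
        have h2 : HasDerivAt (fun x : ℝ => 1 + 2 * a * c * x) (2 * a * c) x0 := by
          simpa using ((hasDerivAt_id x0).const_mul (2 * a * c)).const_add 1
        exact h1.mul h2
      have hf1 := (hasFDerivAt_fst (𝕜 := ℝ) (p := ((0 : ℝ), x0))).mul
          (hH.comp_hasFDerivAt ((0 : ℝ), x0) (hasFDerivAt_snd (𝕜 := ℝ) (p := ((0 : ℝ), x0))))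
      replace hf1 : HasFDerivAt (fun p : ℝ × ℝ => p.1 * (-(p.2 / s) * (1 + 2 * a * c * p.2)))
          _ ((0 : ℝ), x0) := hf1
      have hf1' : HasFDerivAt (fun p : ℝ × ℝ => p.1 * (-(p.2 / s) * (1 + 2 * a * c * p.2)))
          ((-(x0 / s) * (2 - 2 * a)) • ContinuousLinearMap.fst ℝ ℝ ℝ) ((0 : ℝ), x0) := by
        refine hf1.congr_fderiv ?_
        ext
        · simp
          exact Or.inl (by linarith)
        · simp
      have hf2 : HasFDerivAt (fun p : ℝ × ℝ => 2 * p.2 ^ 2 / s *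
          (c * (1 - 2 * a) * p.2 - 2 * a * c ^ 2 * p.2 ^ 2))
          ((-(2 * c * (1 - 2 * a) * x0 ^ 2 / s)) • ContinuousLinearMap.snd ℝ ℝ ℝ)
          ((0 : ℝ), x0) :=
        (hG.comp_hasFDerivAt (h₂ := fun x : ℝ => 2 * x ^ 2 / s *
          (c * (1 - 2 * a) * x - 2 * a * c ^ 2 * x ^ 2)) _ (hasFDerivAt_snd (𝕜 := ℝ) (p := ((0 : ℝ), x0))))
      have hprod := hf1'.prodMk hf2
      have hfun : (fun p : ℝ × ℝ =>
          (-(p.1 * p.2 / s) * (1 + 2 * a * c * p.2),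
            2 * p.2 ^ 2 / s * (c * (1 - 2 * a) * p.2 - 2 * a * c ^ 2 * p.2 ^ 2)))
          = (fun p : ℝ × ℝ => (p.1 * (-(p.2 / s) * (1 + 2 * a * c * p.2)),
            2 * p.2 ^ 2 / s * (c * (1 - 2 * a) * p.2 - 2 * a * c ^ 2 * p.2 ^ 2))) := by
        funext p
        exact congrArg₂ Prod.mk (by ring) rfl
      rw [hfun]
      exact hprod
end

section
/- Let α > 1. The planar system dr/dη = (r/(α-1))(c r^{α+1} x̄^α - 1), dx̄/dη = -((α+1)/(α-1)) x̄ (c r^{α+1} x̄^α - 1) + c r^{α+1} x̄^{α+1} - x̄ - x̄^α has equilibria (0,0) and (0, (2/(α-1))^{1/(α-1)}); the Jacobian at (0,0) is diag(-1/(α-1), 2/(α-1)) (a saddle), and the Jacobian at (0, (2/(α-1))^{1/(α-1)}) is diag(-1/(α-1), -2) (a sink). -/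
private lemma hpow_fst (n : ℕ) (pt : ℝ × ℝ) :
    HasFDerivAt (fun p : ℝ × ℝ => p.1 ^ n)
      (((n : ℝ) * pt.1 ^ (n - 1)) • ContinuousLinearMap.fst ℝ ℝ ℝ) pt :=
  (hasDerivAt_pow n pt.1).comp_hasFDerivAt pt hasFDerivAt_fst

private lemma hpow_snd (n : ℕ) (pt : ℝ × ℝ) :
    HasFDerivAt (fun p : ℝ × ℝ => p.2 ^ n)
      (((n : ℝ) * pt.2 ^ (n - 1)) • ContinuousLinearMap.snd ℝ ℝ ℝ) pt :=
  (hasDerivAt_pow n pt.2).comp_hasFDerivAt pt hasFDerivAt_snd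


set_option maxHeartbeats 1000000 in
/-- For integer `α > 1`, the quenching blow-up system has equilibria `(0,0)` and
`(0, (2/(α-1))^(1/(α-1)))`, with Jacobians `diag(-1/(α-1), 2/(α-1))` (saddle)
and `diag(-1/(α-1), -2)` (sink) respectively. -/
theorem stmt_12 (α : ℕ) (hα : 1 < α) (c : ℝ) :
    let F : ℝ × ℝ → ℝ × ℝ := fun p =>
      (p.1 / ((α : ℝ) - 1) * (c * p.1 ^ (α + 1) * p.2 ^ α - 1),
        -(((α : ℝ) + 1) / ((α : ℝ) - 1)) * p.2 * (c * p.1 ^ (α + 1) * p.2 ^ α - 1)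
          + c * p.1 ^ (α + 1) * p.2 ^ (α + 1) - p.2 - p.2 ^ α)
    let xs : ℝ := (2 / ((α : ℝ) - 1)) ^ ((1 : ℝ) / ((α : ℝ) - 1))
    F (0, 0) = (0, 0) ∧ F (0, xs) = (0, 0) ∧
    HasFDerivAt F
      (((-1 / ((α : ℝ) - 1)) • ContinuousLinearMap.fst ℝ ℝ ℝ).prod
        ((2 / ((α : ℝ) - 1)) • ContinuousLinearMap.snd ℝ ℝ ℝ)) ((0 : ℝ), (0 : ℝ)) ∧
    HasFDerivAt F
      (((-1 / ((α : ℝ) - 1)) • ContinuousLinearMap.fst ℝ ℝ ℝ).prod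
        ((-2 : ℝ) • ContinuousLinearMap.snd ℝ ℝ ℝ)) ((0 : ℝ), xs) := by
  intro F xs
  have hα1 : (1 : ℝ) < (α : ℝ) := by exact_mod_cast hα
  have hApos : (0 : ℝ) < (α : ℝ) - 1 := by linarith
  have hA : ((α : ℝ) - 1) ≠ 0 := ne_of_gt hApos
  have hαne : α ≠ 0 := by omega
  have hα1ne : α + 1 ≠ 0 := by omega
  have hαm1 : α - 1 + 1 = α := by omega
  have hxs_pos : 0 < xs := Real.rpow_pos_of_pos (by positivity) _
  have hxs_pow : xs ^ (α - 1) = 2 / ((α : ℝ) - 1) := by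
    have h1 : xs ^ (α - 1) = ((2 / ((α : ℝ) - 1)) ^ ((1 : ℝ) / ((α : ℝ) - 1))) ^ (((α - 1 : ℕ) : ℝ)) := by
      rw [Real.rpow_natCast]
    rw [h1, ← Real.rpow_mul (by positivity)]
    have : (1 : ℝ) / ((α : ℝ) - 1) * ((α - 1 : ℕ) : ℝ) = 1 := by
      have : ((α - 1 : ℕ) : ℝ) = (α : ℝ) - 1 := by
        push_cast [Nat.cast_sub hα.le]; ring
      rw [this]; field_simp
    rw [this, Real.rpow_one]
  have hxs_α : xs ^ α = (2 / ((α : ℝ) - 1)) * xs := by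
    calc xs ^ α = xs ^ (α - 1) * xs := by rw [← pow_succ, hαm1]
    _ = (2 / ((α : ℝ) - 1)) * xs := by rw [hxs_pow]
  refine ⟨?_, ?_, ?_, ?_⟩
  · simp [F, zero_pow hαne, zero_pow hα1ne]
  · show ((0:ℝ) / ((α : ℝ) - 1) * (c * (0:ℝ) ^ (α + 1) * xs ^ α - 1),
      -(((α : ℝ) + 1) / ((α : ℝ) - 1)) * xs * (c * (0:ℝ) ^ (α + 1) * xs ^ α - 1)
        + c * (0:ℝ) ^ (α + 1) * xs ^ (α + 1) - xs - xs ^ α) = (0, 0)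
    rw [zero_pow hα1ne, hxs_α]
    refine Prod.ext (by simp) ?_
    show -(((α : ℝ) + 1) / ((α : ℝ) - 1)) * xs * (c * 0 * (2 / ((α : ℝ) - 1) * xs) - 1)
        + c * 0 * xs ^ (α + 1) - xs - 2 / ((α : ℝ) - 1) * xs = 0
    field_simp
    ring
  · have hd1 : HasFDerivAt (fun p : ℝ × ℝ =>
        p.1 / ((α : ℝ) - 1) * (c * p.1 ^ (α + 1) * p.2 ^ α - 1)) _ ((0 : ℝ), (0 : ℝ)) :=
      ((hasFDerivAt_fst.mul_const (((α : ℝ) - 1)⁻¹)).mul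
        ((((hpow_fst (α + 1) _).const_mul c).mul (hpow_snd α _)).sub_const 1))
    have hd2 : HasFDerivAt (fun p : ℝ × ℝ =>
        -(((α : ℝ) + 1) / ((α : ℝ) - 1)) * p.2 * (c * p.1 ^ (α + 1) * p.2 ^ α - 1)
          + c * p.1 ^ (α + 1) * p.2 ^ (α + 1) - p.2 - p.2 ^ α) _ ((0 : ℝ), (0 : ℝ)) :=
      ((((hasFDerivAt_snd.const_mul (-(((α : ℝ) + 1) / ((α : ℝ) - 1)))).mul
          ((((hpow_fst (α + 1) _).const_mul c).mul (hpow_snd α _)).sub_const 1)).add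
        (((hpow_fst (α + 1) _).const_mul c).mul (hpow_snd (α + 1) _))).sub
          hasFDerivAt_snd).sub (hpow_snd α _)
    refine HasFDerivAt.congr_fderiv (HasFDerivAt.prodMk hd1 hd2) ?_
    refine (ContinuousLinearMap.ext fun v => ?_).symm
    refine Prod.ext ?_ ?_
    · simp [zero_pow hαne, zero_pow hα1ne, zero_pow (by omega : α - 1 ≠ 0)]
      ring
    · simp [zero_pow hαne, zero_pow hα1ne, zero_pow (by omega : α - 1 ≠ 0)]
      field_simp
      ring
  · have hd1 : HasFDerivAt (fun p : ℝ × ℝ =>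
        p.1 / ((α : ℝ) - 1) * (c * p.1 ^ (α + 1) * p.2 ^ α - 1)) _ ((0 : ℝ), xs) :=
      ((hasFDerivAt_fst.mul_const (((α : ℝ) - 1)⁻¹)).mul
        ((((hpow_fst (α + 1) _).const_mul c).mul (hpow_snd α _)).sub_const 1))
    have hd2 : HasFDerivAt (fun p : ℝ × ℝ =>
        -(((α : ℝ) + 1) / ((α : ℝ) - 1)) * p.2 * (c * p.1 ^ (α + 1) * p.2 ^ α - 1)
          + c * p.1 ^ (α + 1) * p.2 ^ (α + 1) - p.2 - p.2 ^ α) _ ((0 : ℝ), xs) :=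
      ((((hasFDerivAt_snd.const_mul (-(((α : ℝ) + 1) / ((α : ℝ) - 1)))).mul
          ((((hpow_fst (α + 1) _).const_mul c).mul (hpow_snd α _)).sub_const 1)).add
        (((hpow_fst (α + 1) _).const_mul c).mul (hpow_snd (α + 1) _))).sub
          hasFDerivAt_snd).sub (hpow_snd α _)
    refine HasFDerivAt.congr_fderiv (HasFDerivAt.prodMk hd1 hd2) ?_
    refine (ContinuousLinearMap.ext fun v => ?_).symm
    refine Prod.ext ?_ ?_
    · simp [zero_pow hαne, zero_pow hα1ne]
      ring
    · simp [zero_pow hαne, zero_pow hα1ne, hxs_pow]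
      field_simp
      ring
end
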